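/- The element Σ h₍₁₎ ⊗ S(h₍₂₎) of H ⊗ H is invariant under the flip: Σ h₍₁₎ ⊗ S(h₍₂₎) = Σ S(h₍₂₎) ⊗ h₍₁₎. -/

import Mathlib

open TensorProduct Coalgebra HopfAlgebra

namespace C2Aux

variable {k : Type*} [Field k] {H : Type*} [Ring H] [HopfAlgebra k H]

/-- Convolution product on linear maps `H →ₗ[k] H ⊗ H`. -/
noncomputable def conv (f g : H →ₗ[k] H ⊗[k] H) : H →ₗ[k] H ⊗[k] H :=
  LinearMap.mul' k (H ⊗[k] H) ∘ₗ TensorProduct.map f g ∘ₗ comul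

/-- Convolution unit. -/
noncomputable def cunit : H →ₗ[k] H ⊗[k] H :=
  Algebra.linearMap k (H ⊗[k] H) ∘ₗ counit

lemma repr_smul_left {x : H} {ι : Type*} (r : Coalgebra.Repr k x ι) :
    ∑ i ∈ r.index, counit (R := k) (r.right i) • r.left i = x := by
  have h := Coalgebra.sum_tmul_counit_eq (R := k) r
  have h2 := congrArg (TensorProduct.rid k H) h
  rw [map_sum] at h2
  simp only [TensorProduct.rid_tmul, one_smul] at h2
  exact h2

lemma repr_smul_right {x : H} {ι : Type*} (r : Coalgebra.Repr k x ι) :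
    ∑ i ∈ r.index, counit (R := k) (r.left i) • r.right i = x := by
  have h := Coalgebra.sum_counit_tmul_eq (R := k) r
  have h2 := congrArg (TensorProduct.lid k H) h
  rw [map_sum] at h2
  simp only [TensorProduct.lid_tmul, one_smul] at h2
  exact h2

lemma conv_cunit (f : H →ₗ[k] H ⊗[k] H) : conv f cunit = f := by
  ext x
  obtain r := Coalgebra.Repr.arbitrary k x
  have hx : comul (R := k) x = ∑ i ∈ r.index, r.left i ⊗ₜ[k] r.right i := r.eq.symm
  simp only [conv, cunit, LinearMap.coe_comp, Function.comp_apply, hx, map_sum,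
    TensorProduct.map_tmul, LinearMap.mul'_apply, Algebra.linearMap_apply,
    Algebra.algebraMap_eq_smul_one, Algebra.mul_smul_comm, mul_one]
  have hf : f x = ∑ i ∈ r.index, counit (R := k) (r.right i) • f (r.left i) := by
    conv_lhs => rw [← repr_smul_left r]
    rw [map_sum]
    simp only [map_smul]
  rw [hf]

lemma cunit_conv (g : H →ₗ[k] H ⊗[k] H) : conv cunit g = g := by
  ext x
  obtain r := Coalgebra.Repr.arbitrary k x
  have hx : comul (R := k) x = ∑ i ∈ r.index, r.left i ⊗ₜ[k] r.right i := r.eq.symm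
  simp only [conv, cunit, LinearMap.coe_comp, Function.comp_apply, hx, map_sum,
    TensorProduct.map_tmul, LinearMap.mul'_apply, Algebra.linearMap_apply,
    Algebra.algebraMap_eq_smul_one, Algebra.smul_mul_assoc, one_mul]
  have hg : g x = ∑ i ∈ r.index, counit (R := k) (r.left i) • g (r.right i) := by
    conv_lhs => rw [← repr_smul_right r]
    rw [map_sum]
    simp only [map_smul]
  rw [hg]

lemma mul_assoc_map :
    (LinearMap.mul' k (H ⊗[k] H)) ∘ₗ (LinearMap.mul' k (H ⊗[k] H)).lTensor (H ⊗[k] H) ∘ₗ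
      (TensorProduct.assoc k (H ⊗[k] H) (H ⊗[k] H) (H ⊗[k] H) : _ →ₗ[k] _)
    = (LinearMap.mul' k (H ⊗[k] H)) ∘ₗ (LinearMap.mul' k (H ⊗[k] H)).rTensor (H ⊗[k] H) := by
  apply TensorProduct.ext_threefold
  intro a b c
  simp [mul_assoc]

lemma map_conv_left (f g h : H →ₗ[k] H ⊗[k] H) :
    TensorProduct.map (conv f g) h
      = (LinearMap.mul' k (H ⊗[k] H)).rTensor (H ⊗[k] H) ∘ₗ
          TensorProduct.map (TensorProduct.map f g) h ∘ₗ
          (comul (R := k) (A := H)).rTensor H := by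
  apply TensorProduct.ext'
  intro x y
  simp [conv]

lemma map_conv_right (f g h : H →ₗ[k] H ⊗[k] H) :
    TensorProduct.map f (conv g h)
      = (LinearMap.mul' k (H ⊗[k] H)).lTensor (H ⊗[k] H) ∘ₗ
          TensorProduct.map f (TensorProduct.map g h) ∘ₗ
          (comul (R := k) (A := H)).lTensor H := by
  apply TensorProduct.ext'
  intro x y
  simp [conv]

lemma conv_assoc (f g h : H →ₗ[k] H ⊗[k] H) :
    conv (conv f g) h = conv f (conv g h) := by
  ext x
  show LinearMap.mul' k _ ((TensorProduct.map (conv f g) h) (comul x))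
      = LinearMap.mul' k _ ((TensorProduct.map f (conv g h)) (comul x))
  rw [map_conv_left, map_conv_right]
  simp only [LinearMap.coe_comp, Function.comp_apply]
  rw [← Coalgebra.coassoc_apply x, TensorProduct.map_map_assoc]
  exact (DFunLike.congr_fun mul_assoc_map _).symm

noncomputable def Uhalf : H ⊗[k] H →ₗ[k] H ⊗[k] H :=
  (TensorProduct.comm k H H).toLinearMap ∘ₗ
    TensorProduct.map (antipode (R := k)) (antipode (R := k))

noncomputable def Umap : H →ₗ[k] H ⊗[k] H := Uhalf ∘ₗ comul

noncomputable def Kmap : (H ⊗[k] (H ⊗[k] H)) ⊗[k] H →ₗ[k] H ⊗[k] H :=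
  LinearMap.mul' k (H ⊗[k] H) ∘ₗ
  (Uhalf (k := k) (H := H)).lTensor (H ⊗[k] H) ∘ₗ
  (TensorProduct.assoc k (H ⊗[k] H) H H : _ →ₗ[k] _) ∘ₗ
  ((TensorProduct.assoc k H H H).symm.toLinearMap).rTensor H

lemma Kmap_tmul (a b c w : H) :
    Kmap ((a ⊗ₜ[k] (b ⊗ₜ[k] c)) ⊗ₜ[k] w)
      = (a * antipode (R := k) w) ⊗ₜ[k] (b * antipode (R := k) c) := by
  simp [Kmap, Uhalf, Algebra.TensorProduct.tmul_mul_tmul]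

lemma Kmap_comul (a z w : H) :
    Kmap ((a ⊗ₜ[k] (comul (R := k) z)) ⊗ₜ[k] w)
      = counit (R := k) z • ((a * antipode (R := k) w) ⊗ₜ[k] (1 : H)) := by
  have key : ∀ t : H ⊗[k] H, Kmap ((a ⊗ₜ[k] t) ⊗ₜ[k] w)
      = (a * antipode (R := k) w) ⊗ₜ[k]
          (LinearMap.mul' k H ((antipode (R := k)).lTensor H t)) := by
    intro t
    induction t using TensorProduct.induction_on with
    | zero =>
        rw [tmul_zero, zero_tmul, LinearMap.map_zero, LinearMap.map_zero,
          LinearMap.map_zero, tmul_zero]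
    | tmul b c => simp [Kmap_tmul]
    | add u v hu hv => simp [tmul_add, add_tmul, hu, hv]
  rw [key, mul_antipode_lTensor_comul_apply, Algebra.algebraMap_eq_smul_one, tmul_smul]

lemma mapA1 :
    TensorProduct.map (comul (R := k) (A := H)) Umap
      = TensorProduct.map comul Uhalf ∘ₗ (comul (R := k) (A := H)).lTensor H := by
  apply TensorProduct.ext'
  intro x y
  simp [Umap]

lemma mapA2 :
    TensorProduct.map (comul (R := k) (A := H)) Uhalf ∘ₗ
        (TensorProduct.assoc k H H H : _ →ₗ[k] _)
      = (Uhalf (k := k) (H := H)).lTensor (H ⊗[k] H) ∘ₗ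
          (TensorProduct.assoc k (H ⊗[k] H) H H : _ →ₗ[k] _) ∘ₗ
          ((comul (R := k) (A := H)).rTensor H).rTensor H := by
  apply TensorProduct.ext_threefold
  intro a b c
  simp

lemma mapA3 :
    ((comul (R := k) (A := H)).rTensor H).rTensor H ∘ₗ (comul (R := k) (A := H)).rTensor H
      = ((TensorProduct.assoc k H H H).symm.toLinearMap).rTensor H ∘ₗ
          ((comul (R := k) (A := H)).lTensor H).rTensor H ∘ₗ
          (comul (R := k) (A := H)).rTensor H := by
  rw [← LinearMap.rTensor_comp, ← LinearMap.rTensor_comp, ← LinearMap.rTensor_comp]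
  exact congrArg (LinearMap.rTensor H) (Coalgebra.coassoc_symm (R := k) (A := H)).symm

lemma conv_comul_Umap : conv (comul (R := k) (A := H)) Umap = cunit := by
  ext x
  show LinearMap.mul' k (H ⊗[k] H)
      ((TensorProduct.map (comul (R := k)) Umap) (comul x)) = cunit x
  rw [mapA1]
  simp only [LinearMap.coe_comp, Function.comp_apply]
  rw [← Coalgebra.coassoc_apply x]
  have e2 := DFunLike.congr_fun (mapA2 (k := k) (H := H))
    ((comul (R := k) (A := H)).rTensor H (comul x))
  simp only [LinearMap.coe_comp, Function.comp_apply, LinearEquiv.coe_coe] at e2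
  rw [e2]
  have e3 := DFunLike.congr_fun (mapA3 (k := k) (H := H)) (comul x)
  simp only [LinearMap.coe_comp, Function.comp_apply] at e3
  rw [e3]
  have kapp : ∀ t : (H ⊗[k] (H ⊗[k] H)) ⊗[k] H,
      LinearMap.mul' k (H ⊗[k] H)
        ((Uhalf (k := k) (H := H)).lTensor (H ⊗[k] H)
          ((TensorProduct.assoc k (H ⊗[k] H) H H)
            ((((TensorProduct.assoc k H H H).symm.toLinearMap).rTensor H) t))) = Kmap t := by
    intro t; rfl
  rw [kapp]
  obtain r := Coalgebra.Repr.arbitrary k x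
  have hx : comul (R := k) x = ∑ i ∈ r.index, r.left i ⊗ₜ[k] r.right i := r.eq.symm
  rw [hx, map_sum, map_sum, map_sum]
  have step : ∀ i ∈ r.index,
      Kmap ((((comul (R := k) (A := H)).lTensor H).rTensor H)
          (((comul (R := k) (A := H)).rTensor H) (r.left i ⊗ₜ[k] r.right i)))
        = (r.left i * antipode (R := k) (r.right i)) ⊗ₜ[k] (1 : H) := by
    intro i _
    rw [LinearMap.rTensor_tmul, LinearMap.rTensor_tmul]
    obtain s := Coalgebra.Repr.arbitrary k (r.left i)
    have hs : comul (R := k) (r.left i) = ∑ j ∈ s.index, s.left j ⊗ₜ[k] s.right j := s.eq.symm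
    rw [hs, map_sum]
    simp only [LinearMap.lTensor_tmul]
    rw [sum_tmul, map_sum]
    simp only [Kmap_comul]
    simp only [smul_tmul', ← smul_mul_assoc]
    rw [← sum_tmul, ← Finset.sum_mul, repr_smul_left s]
  rw [Finset.sum_congr rfl step, ← sum_tmul, HopfAlgebra.sum_mul_antipode_eq_algebraMap_counit r]
  simp [cunit, Algebra.TensorProduct.algebraMap_apply]

lemma conv_comulS_comul :
    conv ((comul (R := k) (A := H)) ∘ₗ antipode k) comul = cunit := by
  ext x
  show LinearMap.mul' k (H ⊗[k] H)
      ((TensorProduct.map ((comul (R := k)) ∘ₗ antipode k) comul) (comul x)) = cunit x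
  obtain r := Coalgebra.Repr.arbitrary k x
  have hx : comul (R := k) x = ∑ i ∈ r.index, r.left i ⊗ₜ[k] r.right i := r.eq.symm
  rw [hx, map_sum, map_sum]
  have step : ∀ i ∈ r.index,
      LinearMap.mul' k (H ⊗[k] H)
          ((TensorProduct.map ((comul (R := k)) ∘ₗ antipode k) comul)
            (r.left i ⊗ₜ[k] r.right i))
        = comul (R := k) (antipode (R := k) (r.left i) * r.right i) := by
    intro i _
    simp [Bialgebra.comul_mul]
  rw [Finset.sum_congr rfl step, ← map_sum, HopfAlgebra.sum_antipode_mul_eq_algebraMap_counit r]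
  simp [cunit]

theorem antipode_anticoalg :
    (comul (R := k) (A := H)) ∘ₗ antipode k = Umap := by
  calc (comul (R := k) (A := H)) ∘ₗ antipode k
      = conv ((comul (R := k) (A := H)) ∘ₗ antipode k) cunit := (conv_cunit _).symm
    _ = conv ((comul (R := k) (A := H)) ∘ₗ antipode k) (conv comul Umap) := by
        rw [conv_comul_Umap]
    _ = conv (conv ((comul (R := k) (A := H)) ∘ₗ antipode k) comul) Umap :=
        (conv_assoc _ _ _).symm
    _ = conv cunit Umap := by rw [conv_comulS_comul]
    _ = Umap := cunit_conv _

end C2Aux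

/-- The element `Σ h₍₁₎ ⊗ S(h₍₂₎)` of `H ⊗ H` is invariant under the flip:
`Σ h₍₁₎ ⊗ S(h₍₂₎) = Σ S(h₍₂₎) ⊗ h₍₁₎`. -/
theorem c2_flip_invariant
    {k : Type*} [Field k] {H : Type*} [Ring H] [HopfAlgebra k H]
    [FiniteDimensional k H]
    (n : k) (hn : n = (Module.finrank k H : k))
    (h : H)
    (hInt : ∀ x : H, x * h = counit (R := k) x • h)
    (hInt' : ∀ x : H, h * x = counit (R := k) x • h)
    (hεh : counit (R := k) h = n)
    (hSS : ∀ x : H, antipode (R := k) (antipode (R := k) x) = x)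
    (hSh : antipode (R := k) h = h) :
    LinearMap.lTensor H (antipode (R := k)) (comul h)
      = TensorProduct.comm k H H (LinearMap.lTensor H (antipode (R := k)) (comul h)) := by
  have hac := DFunLike.congr_fun (C2Aux.antipode_anticoalg (k := k) (H := H)) h
  rw [LinearMap.comp_apply, hSh] at hac
  -- hac : comul h = Umap h = comm (map S S (comul h))
  have hac' : comul (R := k) h
      = (TensorProduct.comm k H H).toLinearMap
          (TensorProduct.map (antipode (R := k)) (antipode (R := k)) (comul h)) := hac
  have key : (LinearMap.lTensor H (antipode (R := k))) ∘ₗ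
        (TensorProduct.comm k H H).toLinearMap ∘ₗ
        TensorProduct.map (antipode (R := k)) (antipode (R := k))
      = (TensorProduct.comm k H H).toLinearMap ∘ₗ
        LinearMap.lTensor H (antipode (R := k)) := by
    apply TensorProduct.ext'
    intro a b
    simp [hSS]
  conv_lhs => rw [hac']
  have := DFunLike.congr_fun key (comul (R := k) h)
  simp only [LinearMap.coe_comp, Function.comp_apply] at this
  rw [this]
  rfl
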